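/- Let p be an odd prime and n ∈ ℕ. Then for every coloring χ of the positive integers with r colors there exist positive integers x, z, c and a color t such that χ(x·z·(p^i+1)^c − x) = t for every i ∈ {1,…,n}. -/
import Mathlib


/-- For an odd prime `p`, `n ∈ ℕ` and any `r`-coloring of the positive integers,
there are positive `x, z, c` such that all `x·z·(p^i+1)^c − x`, `1 ≤ i ≤ n`,
receive the same color. -/
theorem stmt17 (r n : ℕ) (p : ℕ) (hp : p.Prime) (hodd : p ≠ 2) (χ : ℕ → Fin r) :
    ∃ x z c : ℕ, 0 < x ∧ 0 < z ∧ 0 < c ∧ ∃ t : Fin r,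
      ∀ i : ℕ, 1 ≤ i → i ≤ n → χ (x * z * (p ^ i + 1) ^ c - x) = t := by
  classical
  -- the monoid and the encoding map
  set F : (Fin (n + 1) → ℕ) → ℕ := fun v =>
    p ^ v 0 * ∏ j : Fin (n + 1), (if j = 0 then 1 else (p ^ (j : ℕ) + 1) ^ v j) - p ^ v 0
    with hF
  set S : Finset (Fin (n + 1) → ℕ) :=
    Finset.univ.image (fun i : Fin (n + 1) => Pi.single i 1) with hS
  obtain ⟨a, ha, b, t, hmono⟩ :=
    Combinatorics.exists_mono_homothetic_copy S (fun v => χ (F v))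
  refine ⟨p ^ b 0,
    ∏ j : Fin (n + 1), (if j = 0 then 1 else (p ^ (j : ℕ) + 1) ^ b j), a,
    pow_pos hp.pos _, Finset.prod_pos (by intro j _; split <;> positivity), ha, t, ?_⟩
  intro i hi1 hin
  set i' : Fin (n + 1) := ⟨i, by omega⟩ with hi'
  have hi0 : i' ≠ 0 := by
    simp only [hi', Fin.ne_iff_vne, Fin.val_zero]
    omega
  set s₀ : Fin (n + 1) → ℕ := Pi.single i' 1 with hs₀
  have hmem : s₀ ∈ S := by
    simp [hS, hs₀]
  have h := hmono _ hmem
  set v : Fin (n + 1) → ℕ := a • s₀ + b with hv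
  have hvj : ∀ j, v j = a * s₀ j + b j := by intro j; simp [hv]
  have hv0 : v 0 = b 0 := by
    rw [hvj]; simp [hs₀, Pi.single_apply, Ne.symm hi0]
  have hvi : v i' = a + b i' := by
    rw [hvj]; simp [hs₀, Pi.single_apply]
  have hvo : ∀ j, j ≠ i' → v j = b j := by
    intro j hj
    rw [hvj]; simp [hs₀, Pi.single_apply, hj]
  have hprod :
      (∏ j : Fin (n + 1), (if j = 0 then 1 else (p ^ (j : ℕ) + 1) ^ v j))
        = (∏ j : Fin (n + 1), (if j = 0 then 1 else (p ^ (j : ℕ) + 1) ^ b j))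
          * (p ^ i + 1) ^ a := by
    rw [Finset.prod_eq_mul_prod_sdiff_singleton_of_mem (Finset.mem_univ i'),
      Finset.prod_eq_mul_prod_sdiff_singleton_of_mem (Finset.mem_univ i')
        (fun j => (if j = 0 then 1 else (p ^ (j : ℕ) + 1) ^ b j))]
    have htail : ∀ j ∈ Finset.univ \ {i'},
        (if j = 0 then 1 else (p ^ (j : ℕ) + 1) ^ v j)
          = (if j = 0 then 1 else (p ^ (j : ℕ) + 1) ^ b j) := by
      intro j hj
      have hji : j ≠ i' := by simpa using (Finset.mem_sdiff.mp hj).2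
      rw [hvo j hji]
    rw [Finset.prod_congr rfl htail]
    simp only [if_neg hi0, hvi]
    rw [pow_add]
    ring
  have hFv : F v
      = p ^ b 0 * (∏ j : Fin (n + 1), (if j = 0 then 1 else (p ^ (j : ℕ) + 1) ^ b j))
          * (p ^ i + 1) ^ a - p ^ b 0 := by
    rw [hF]
    simp only [hv0, hprod]
    congr 1
    ring
  rw [← hFv]
  rw [hv] at hFv ⊢
  exact h
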